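/- With notation as in the main theorem, for t ∈ (0,π], r ≥ 1/2, and a.e. τ: |K_F(t+τ,τ)·P(r,t)/(1−r)| ≤ (π‖F'‖_∞²/2)·(1/t²)·∫₀ᵗ ω(‖F'‖_∞ u) du, and this dominating function Q(t) = (π‖F'‖_∞²/2)·t^{−2}∫₀ᵗ ω(‖F'‖_∞ u) du satisfies ∫₀^π Q(t) dt < ∞ when ω is Dini integrable. -/

import Mathlib

open MeasureTheory Set Complex Real

lemma poisson_aux (t r : ℝ) (ht0 : 0 < t) (htπ : t ≤ π) (hr2 : 1/2 ≤ r) (hr1 : r < 1) :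
    |((1 - r ^ 2) / (2 * π * (1 - 2 * r * Real.cos t + r ^ 2))) / (1 - r)|
      ≤ π / (2 * t ^ 2) := by
  have hπ := Real.pi_pos
  have ht2 : (0:ℝ) < t ^ 2 := by positivity
  have hcos : Real.cos t ≤ 1 - 2 / π ^ 2 * t ^ 2 :=
    Real.cos_le_one_sub_mul_cos_sq (by rw [_root_.abs_of_pos ht0]; exact htπ)
  have hq : (0:ℝ) ≤ t ^ 2 / π ^ 2 := by positivity
  have hD : 2 * t ^ 2 / π ^ 2 ≤ 1 - 2 * r * Real.cos t + r ^ 2 := by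
    set X : ℝ := t ^ 2 / π ^ 2 with hX
    have hX1 : 2 / π ^ 2 * t ^ 2 = 2 * X := by rw [hX]; field_simp
    have hX2 : 2 * t ^ 2 / π ^ 2 = 2 * X := by rw [hX]; field_simp
    rw [hX1] at hcos
    rw [hX2]
    nlinarith [sq_nonneg (1 - r), mul_nonneg (by linarith : (0:ℝ) ≤ 2 * r - 1) hq,
      mul_le_mul_of_nonneg_left hcos (by linarith : (0:ℝ) ≤ 2 * r)]
  have hDpos : 0 < 1 - 2 * r * Real.cos t + r ^ 2 := by
    have : (0:ℝ) < 2 * t ^ 2 / π ^ 2 := by positivity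
    linarith
  have hr1' : (0:ℝ) < 1 - r := by linarith
  have heq : ((1 - r ^ 2) / (2 * π * (1 - 2 * r * Real.cos t + r ^ 2))) / (1 - r)
      = (1 + r) / (2 * π * (1 - 2 * r * Real.cos t + r ^ 2)) := by
    rw [div_div, div_eq_div_iff (by positivity) (by positivity)]
    ring
  rw [heq, _root_.abs_of_nonneg (by positivity),
    div_le_div_iff₀ (by positivity) (by positivity)]
  have hDD : 2 * t ^ 2 ≤ π ^ 2 * (1 - 2 * r * Real.cos t + r ^ 2) := by
    have h7 := mul_le_mul_of_nonneg_left hD (by positivity : (0:ℝ) ≤ π ^ 2)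
    have h8 : π ^ 2 * (2 * t ^ 2 / π ^ 2) = 2 * t ^ 2 := by field_simp
    linarith
  nlinarith [hDD, mul_le_mul_of_nonneg_right (by linarith : r ≤ 1) ht2.le]


theorem stmt_15 (l : ℝ) (hl : 0 < l) (g : ℝ → ℂ) (g' : ℝ → ℂ) (ω : ℝ → ℝ)
    (hper : ∀ s, g (s + l) = g s)
    (hderiv : ∀ s, HasDerivAt g (g' s) s)
    (hunit : ∀ s, ‖g' s‖ = 1)
    (hωmono : Monotone ω)
    (hωnonneg : ∀ x, 0 ≤ ω x)
    (hωbdd : ∃ M, ∀ x, ω x ≤ M)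
    (hmod : ∀ s t : ℝ, |s - t| ≤ l → ‖g' s - g' t‖ ≤ ω |s - t|)
    (hDini : ∃ k > 0, IntegrableOn (fun u => ω u / u) (Ioc 0 k))
    (f : ℝ → ℝ) (L : ℝ) (hL : 0 < L)
    (hflip : LipschitzWith (Real.toNNReal L) f)
    (hfmono : Monotone f)
    (hfper : ∀ t, f (t + 2 * π) = f t + l) :
    (∀ᵐ τ : ℝ, ∀ t ∈ Ioc 0 π, ∀ r ∈ Ico (1/2 : ℝ) 1,
      |deriv f τ *
          ((starRingEnd ℂ) (g (f (t + τ)) - g (f τ)) * (Complex.I * g' (f τ))).re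
        * (((1 - r ^ 2) / (2 * π * (1 - 2 * r * Real.cos t + r ^ 2))) / (1 - r))|
        ≤ (π * L ^ 2 / 2) * (1 / t ^ 2) * ∫ u in (0:ℝ)..t, ω (L * u)) ∧
    IntegrableOn (fun t => (π * L ^ 2 / 2) * (1 / t ^ 2) * ∫ u in (0:ℝ)..t, ω (L * u))
      (Ioc 0 π) := by
  obtain ⟨M, hM⟩ := hωbdd
  have hπ := Real.pi_pos
  have hM0 : 0 ≤ M := (hωnonneg 0).trans (hM 0)
  have hωLmono : Monotone (fun u => ω (L * u)) := fun a b hab =>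
    hωmono (by nlinarith)
  have hωLii : ∀ a b : ℝ, IntervalIntegrable (fun u => ω (L * u)) volume a b :=
    fun a b => hωLmono.intervalIntegrable
  have hωii : ∀ a b : ℝ, IntervalIntegrable ω volume a b :=
    fun a b => hωmono.intervalIntegrable
  have hJnonneg : ∀ t : ℝ, 0 ≤ t → 0 ≤ ∫ u in (0:ℝ)..t, ω (L * u) := fun t ht =>
    intervalIntegral.integral_nonneg ht (fun u _ => hωnonneg _)
  constructor
  ·
    filter_upwards with τ
    rintro t ⟨ht0, htπ⟩ r ⟨hr2, hr1⟩
    -- derivative bound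
    have hLc : ((Real.toNNReal L : NNReal) : ℝ) = L := Real.coe_toNNReal L hL.le
    have hA : |deriv f τ| ≤ L := by
      have := norm_deriv_le_of_lipschitz (𝕜 := ℝ) (x₀ := τ) hflip
      rwa [Real.norm_eq_abs, hLc] at this
    set σ := f τ with hσdef
    set s := f (t + τ) with hsdef
    have hσs : σ ≤ s := hfmono (by linarith)
    have hsl : s - σ ≤ l := by
      have h1 : s ≤ f (τ + 2 * π) := hfmono (by linarith)
      rw [hfper] at h1; linarith
    have hsLt : s - σ ≤ L * t := by
      have h2 := hflip.dist_le_mul (t + τ) τ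
      rw [Real.dist_eq, Real.dist_eq, hLc] at h2
      have : |s - σ| ≤ L * |t| := by simpa [hsdef, hσdef] using h2
      rw [_root_.abs_of_pos ht0] at this
      exact (le_abs_self _).trans this
    -- the Re factor bound
    have hg'meas : Measurable g' := by
      have hg'eq : g' = deriv g := funext fun x => ((hderiv x).deriv).symm
      rw [hg'eq]; exact measurable_deriv g
    have hg'ii : ∀ a b : ℝ, IntervalIntegrable g' volume a b := by
      intro a b
      rw [intervalIntegrable_iff]
      apply Measure.integrableOn_of_bounded (M := 1) measure_Ioc_lt_top.ne
        hg'meas.aestronglyMeasurable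
      filter_upwards with x using (hunit x).le
    set c : ℂ := Complex.I * g' σ with hcdef
    have hcnorm : ‖c‖ = 1 := by
      rw [hcdef, norm_mul, Complex.norm_I, hunit, one_mul]
    set T : ℂ →L[ℝ] ℝ :=
      Complex.reCLM.comp ((c • ContinuousLinearMap.id ℝ ℂ).comp
        Complex.conjCLE.toContinuousLinearMap) with hTdef
    have hT : ∀ z : ℂ, T z = ((starRingEnd ℂ) z * c).re := by
      intro z
      simp [hTdef, mul_comm]
    have hftc : g s - g σ = ∫ u in σ..s, g' u :=
      (intervalIntegral.integral_eq_sub_of_hasDerivAt (fun x _ => hderiv x) (hg'ii σ s)).symm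
    have hTpt : ∀ u ∈ Set.Icc σ s, |T (g' u)| ≤ ω (u - σ) := by
      intro u hu
      have huσ : 0 ≤ u - σ := by linarith [hu.1]
      have huσl : |u - σ| ≤ l := by
        rw [_root_.abs_of_nonneg huσ]; linarith [hu.2]
      have hmm := hmod u σ huσl
      rw [_root_.abs_of_nonneg huσ] at hmm
      have hzero : ((starRingEnd ℂ) (g' σ) * c).re = 0 := by
        rw [hcdef]
        have : (starRingEnd ℂ) (g' σ) * (Complex.I * g' σ)
            = Complex.I * ((Complex.normSq (g' σ) : ℝ) : ℂ) := by
          have h9 : (starRingEnd ℂ) (g' σ) * g' σ = (Complex.normSq (g' σ) : ℂ) := by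
            rw [mul_comm]; exact Complex.mul_conj (g' σ)
          calc (starRingEnd ℂ) (g' σ) * (Complex.I * g' σ)
              = Complex.I * ((starRingEnd ℂ) (g' σ) * g' σ) := by ring
            _ = Complex.I * ((Complex.normSq (g' σ) : ℝ) : ℂ) := by rw [h9]
        rw [this]
        simp
      have hsplit : T (g' u) = ((starRingEnd ℂ) (g' u - g' σ) * c).re := by
        rw [hT, map_sub, sub_mul, Complex.sub_re, hzero, sub_zero]
      rw [hsplit]
      calc |((starRingEnd ℂ) (g' u - g' σ) * c).re|
          ≤ ‖(starRingEnd ℂ) (g' u - g' σ) * c‖ := Complex.abs_re_le_norm _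
        _ = ‖g' u - g' σ‖ * ‖c‖ := by rw [norm_mul, Complex.norm_conj]
        _ ≤ ω (u - σ) := by rw [hcnorm, mul_one]; exact hmm
    have hB : |((starRingEnd ℂ) (g s - g σ) * c).re| ≤ L * ∫ u in (0:ℝ)..t, ω (L * u) := by
      have h1 : ((starRingEnd ℂ) (g s - g σ) * c).re = ∫ u in σ..s, T (g' u) := by
        rw [← hT, hftc, T.intervalIntegral_comp_comm (hg'ii σ s)]
      have hTii : IntervalIntegrable (fun u => T (g' u)) volume σ s := by
        rw [intervalIntegrable_iff]
        exact T.integrable_comp (intervalIntegrable_iff.1 (hg'ii σ s))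
      have hωσii : IntervalIntegrable (fun u => ω (u - σ)) volume σ s :=
        (hωmono.comp (fun a b hab => by simpa using sub_le_sub_right hab σ)).intervalIntegrable
      calc |((starRingEnd ℂ) (g s - g σ) * c).re|
          = |∫ u in σ..s, T (g' u)| := by rw [h1]
        _ ≤ ∫ u in σ..s, |T (g' u)| := intervalIntegral.abs_integral_le_integral_abs hσs
        _ ≤ ∫ u in σ..s, ω (u - σ) := by
            apply intervalIntegral.integral_mono_on hσs hTii.abs hωσii hTpt
        _ = ∫ u in (0:ℝ)..(s - σ), ω u := by
            rw [intervalIntegral.integral_comp_sub_right (fun u => ω u) σ, sub_self]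
        _ ≤ ∫ u in (0:ℝ)..(L * t), ω u := by
            apply intervalIntegral.integral_mono_interval le_rfl (sub_nonneg.2 hσs) hsLt
              (Filter.Eventually.of_forall fun x => hωnonneg x) (hωii 0 (L * t))
        _ = L * ∫ u in (0:ℝ)..t, ω (L * u) := by
            rw [intervalIntegral.integral_comp_mul_left (fun u => ω u) hL.ne', mul_zero,
              smul_eq_mul, ← mul_assoc, mul_inv_cancel₀ hL.ne', one_mul]
    -- the Poisson factor bound
    have ht2 : (0:ℝ) < t ^ 2 := by positivity
    have hC : |((1 - r ^ 2) / (2 * π * (1 - 2 * r * Real.cos t + r ^ 2))) / (1 - r)|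
        ≤ π / (2 * t ^ 2) := poisson_aux t r ht0 htπ hr2 hr1
    -- combine
    rw [abs_mul, abs_mul]
    have hJ := hJnonneg t ht0.le
    calc |deriv f τ| * |((starRingEnd ℂ) (g s - g σ) * c).re|
          * |((1 - r ^ 2) / (2 * π * (1 - 2 * r * Real.cos t + r ^ 2))) / (1 - r)|
        ≤ L * (L * ∫ u in (0:ℝ)..t, ω (L * u)) * (π / (2 * t ^ 2)) := by
          apply mul_le_mul
          · exact mul_le_mul hA hB (abs_nonneg _) hL.le
          · exact hC
          · exact abs_nonneg _
          · positivity
      _ = (π * L ^ 2 / 2) * (1 / t ^ 2) * ∫ u in (0:ℝ)..t, ω (L * u) := by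
          field_simp
  · -- integrability of the dominating function
    obtain ⟨k, hk, hkint⟩ := hDini
    set A := max k (L * π) with hAdef
    have hkA : k ≤ A := le_max_left _ _
    have hLπA : L * π ≤ A := le_max_right _ _
    have hωmeas : Measurable ω := hωmono.measurable
    have hhint : IntegrableOn (fun u => ω u / u) (Ioc 0 A) := by
      have hunion : Ioc (0:ℝ) k ∪ Ioc k A = Ioc 0 A := Ioc_union_Ioc_eq_Ioc hk.le hkA
      rw [← hunion]
      apply hkint.union
      apply Measure.integrableOn_of_bounded (M := M / k) (by simp [measure_Ioc_lt_top.ne])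
        ((hωmeas.div measurable_id).aestronglyMeasurable)
      rw [ae_restrict_iff' measurableSet_Ioc]
      filter_upwards with x hx
      have hx0 : 0 < x := hk.trans hx.1
      show ‖ω x / x‖ ≤ M / k
      rw [Real.norm_eq_abs, _root_.abs_of_nonneg (div_nonneg (hωnonneg x) hx0.le)]
      apply div_le_div₀ (by exact hM0) (hM x) hk hx.1.le
    set h : ℝ → ℝ := (Ioc (0:ℝ) A).indicator (fun u => ω u / u) with hhdef
    have hhInt : Integrable h := by
      rw [hhdef, integrable_indicator_iff measurableSet_Ioc]
      exact hhint
    have hGInt : Integrable (fun t => (π * L ^ 2 / 2) * (L * h (L * t))) := by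
      apply Integrable.const_mul
      apply Integrable.const_mul
      exact (integrable_comp_mul_left_iff h hL.ne').2 hhInt
    -- the primitive is monotone hence measurable
    set J : ℝ → ℝ := fun t => ∫ u in (0:ℝ)..t, ω (L * u) with hJdef
    have hJmono : Monotone J := by
      intro a b hab
      have := intervalIntegral.integral_add_adjacent_intervals (hωLii 0 a) (hωLii a b)
      have hnn : 0 ≤ ∫ u in a..b, ω (L * u) :=
        intervalIntegral.integral_nonneg hab (fun u _ => hωnonneg _)
      simp only [hJdef]
      rw [← this]
      linarith
    have hQmeas : AEStronglyMeasurable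
        (fun t => (π * L ^ 2 / 2) * (1 / t ^ 2) * J t) (volume.restrict (Ioc 0 π)) := by
      apply Measurable.aestronglyMeasurable
      exact ((measurable_const.mul
        (measurable_const.div (measurable_id.pow_const 2))).mul hJmono.measurable)
    apply Integrable.mono' hGInt.integrableOn hQmeas
    rw [ae_restrict_iff' measurableSet_Ioc]
    filter_upwards with t ht
    obtain ⟨ht0, htπ⟩ := ht
    have ht2 : (0:ℝ) < t ^ 2 := by positivity
    have hLt : 0 < L * t := by positivity
    have hLtA : L * t ≤ A := le_trans (by nlinarith) hLπA
    have hhval : h (L * t) = ω (L * t) / (L * t) := by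
      rw [hhdef, indicator_of_mem (mem_Ioc.2 ⟨hLt, hLtA⟩)]
    have hJle : J t ≤ t * ω (L * t) := by
      have hconst : ∫ u in (0:ℝ)..t, ω (L * t) = t * ω (L * t) := by simp
      rw [hJdef, ← hconst]
      apply intervalIntegral.integral_mono_on ht0.le (hωLii 0 t)
        (intervalIntegrable_const) (fun x hx => hωmono (by nlinarith [hx.2]))
    have hQnn : 0 ≤ (π * L ^ 2 / 2) * (1 / t ^ 2) * J t := by
      have := hJnonneg t ht0.le
      positivity
    rw [Real.norm_eq_abs, _root_.abs_of_nonneg hQnn]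
    rw [hhval]
    have key : (π * L ^ 2 / 2) * (1 / t ^ 2) * J t
        ≤ (π * L ^ 2 / 2) * (1 / t ^ 2) * (t * ω (L * t)) := by
      apply mul_le_mul_of_nonneg_left hJle (by positivity)
    apply key.trans
    apply le_of_eq
    field_simp
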